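/- Let p be a prime. Then for all integers i and all j ∈ {0, ..., p^2 - 1}, the values (1/p^{p+1})·∏_{k=0}^{p-1}(F_p(ip^2+j) - kp), as i runs over a complete residue system modulo p, form a complete residue system modulo p. -/

import Mathlib

open Finset

private def auxF (p : ℕ) (x : ℤ) : ℤ := ∏ l ∈ range p, (x - l)

private lemma auxW (p : ℕ) (hp : p.Prime) {m : ℕ} (hm : m < p) :
    ((∏ k ∈ (range p).erase m, ((m : ℤ) - k) : ℤ) : ZMod p) = -1 := by
  haveI : Fact p.Prime := ⟨hp⟩
  push_cast
  rw [Finset.prod_nbij' (i := fun k => if k < m then m - k else m + p - k)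
    (j := fun r => if r ≤ m then m - r else m + p - r) (t := Ico 1 p)
    (g := fun r => ((r : ZMod p)))]
  · exact ZMod.prod_Ico_one_prime p
  · intro a ha; simp only [mem_erase, mem_range] at ha; simp only [mem_Ico]; split_ifs <;> omega
  · intro a ha; simp only [mem_Ico] at ha; simp only [mem_erase, mem_range]; split_ifs <;> omega
  · intro a ha; simp only [mem_erase, mem_range] at ha; split_ifs <;> omega
  · intro a ha; simp only [mem_Ico] at ha; split_ifs <;> omega
  · intro a ha
    simp only [mem_erase, mem_range] at ha
    split_ifs with h
    · have : (((m - a : ℕ) : ZMod p)) = (m : ZMod p) - a := by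
        push_cast [Nat.cast_sub h.le]; ring
      rw [this]
    · have h2 : a ≤ m + p := by omega
      have : (((m + p - a : ℕ) : ZMod p)) = (m : ZMod p) - a := by
        push_cast [Nat.cast_sub h2]
        simp [ZMod.natCast_self]
      rw [this]

private lemma auxProdModEq (n : ℤ) (S : Finset ℕ) (a b : ℕ → ℤ)
    (h : ∀ k ∈ S, a k ≡ b k [ZMOD n]) :
    (∏ k ∈ S, a k) ≡ ∏ k ∈ S, b k [ZMOD n] := by
  classical
  induction S using Finset.induction with
  | empty => rfl
  | @insert x S hx ih =>
    rw [prod_insert hx, prod_insert hx]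
    exact (h _ (mem_insert_self _ _)).mul (ih fun k hk => h k (mem_insert_of_mem hk))

private lemma auxG (p : ℕ) (hp : p.Prime) (c x : ℤ) (hc : (p : ℤ) ∣ c) :
    (p : ℤ) * c ∣ auxF p (x + c) - auxF p x + c := by
  have hp0 : (0:ℤ) < p := by exact_mod_cast hp.pos
  set m : ℕ := (x % p).toNat with hmdef
  have hm0 : (m : ℤ) = x % p := Int.toNat_of_nonneg (Int.emod_nonneg x hp0.ne')
  have hm : m < p := by
    have := Int.emod_lt_of_pos x hp0; omega
  have hmem : m ∈ range p := mem_range.mpr hm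
  have hdvd : (p : ℤ) ∣ x - m := by
    rw [hm0]; exact Int.dvd_self_sub_of_emod_eq rfl
  set D₀ : ℤ := ∏ k ∈ (range p).erase m, (x - k) with hD₀
  set D₁ : ℤ := ∏ k ∈ (range p).erase m, (x + c - k) with hD₁
  have hfx : auxF p x = (x - m) * D₀ := (Finset.mul_prod_erase _ _ hmem).symm
  have hfxc : auxF p (x + c) = (x + c - m) * D₁ := (Finset.mul_prod_erase _ _ hmem).symm
  have key : auxF p (x + c) - auxF p x + c = (x - m) * (D₁ - D₀) + c * (D₁ + 1) := by
    rw [hfx, hfxc]; ring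
  rw [key]
  have h1 : (p : ℤ) * c ∣ (x - m) * (D₁ - D₀) := by
    refine mul_dvd_mul hdvd ?_
    refine Int.ModEq.dvd (auxProdModEq c _ _ _ fun k hk => ?_)
    refine Int.modEq_iff_dvd.mpr ?_
    have h9 : x + c - (k:ℤ) - (x - k) = c := by ring
    rw [h9]
  have h2 : (p : ℤ) * c ∣ c * (D₁ + 1) := by
    rw [mul_comm (p:ℤ) c]
    refine mul_dvd_mul_left c ?_
    have : ((D₁ + 1 : ℤ) : ZMod p) = 0 := by
      push_cast
      have hx : ((x : ZMod p) + c) = (m : ZMod p) := by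
        have : ((x - m : ℤ) : ZMod p) = 0 := by
          rw [ZMod.intCast_zmod_eq_zero_iff_dvd]; exact_mod_cast hdvd
        have hc0 : ((c : ℤ) : ZMod p) = 0 := by
          rw [ZMod.intCast_zmod_eq_zero_iff_dvd]; exact_mod_cast hc
        push_cast at this
        rw [hc0]; linear_combination this
      have : ((D₁ : ℤ) : ZMod p) = -1 := by
        rw [hD₁]; push_cast
        rw [← auxW p hp hm]
        push_cast
        exact Finset.prod_congr rfl fun k _ => by rw [hx]
      rw [this]; ring
    have := (ZMod.intCast_zmod_eq_zero_iff_dvd _ p).mp this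
    exact_mod_cast this
  exact dvd_add h1 h2

private lemma auxDvdF (p : ℕ) (hp : p.Prime) (x : ℤ) : (p : ℤ) ∣ auxF p x := by
  have hp0 : (0:ℤ) < p := by exact_mod_cast hp.pos
  set m : ℕ := (x % p).toNat with hmdef
  have hm0 : (m : ℤ) = x % p := Int.toNat_of_nonneg (Int.emod_nonneg x hp0.ne')
  have hm : m < p := by have := Int.emod_lt_of_pos x hp0; omega
  have hdvd : (p : ℤ) ∣ x - m := by rw [hm0]; exact Int.dvd_self_sub_of_emod_eq rfl
  exact hdvd.trans (Finset.dvd_prod_of_mem _ (mem_range.mpr hm))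

private noncomputable def auxS (p : ℕ) (x : ℤ) : ℤ := auxF p x / p

private lemma auxFS (p : ℕ) (hp : p.Prime) (x : ℤ) : auxF p x = p * auxS p x :=
  (Int.mul_ediv_cancel' (auxDvdF p hp x)).symm

private lemma auxB (p : ℕ) (hp : p.Prime) (x : ℤ) :
    (p : ℤ)^2 ∣ auxS p (x + p^2) - auxS p x + p := by
  have hp0 : ((p:ℤ)) ≠ 0 := by exact_mod_cast hp.pos.ne'
  have h := auxG p hp ((p:ℤ)^2) x ⟨p, by ring⟩
  rw [auxFS p hp (x + p^2), auxFS p hp x] at h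
  have h2 : (p:ℤ) * ((p:ℤ)^2) ∣ (p:ℤ) * (auxS p (x + p^2) - auxS p x + p) := by
    convert h using 1; ring
  exact (mul_dvd_mul_iff_left hp0).mp h2

private lemma auxC (p : ℕ) (hp : p.Prime) (x : ℤ) :
    (p : ℤ) ∣ auxS p (auxS p (x + p^2)) - auxS p (auxS p x) - 1 := by
  have hp0 : ((p:ℤ)) ≠ 0 := by exact_mod_cast hp.pos.ne'
  set s := auxS p x
  set s' := auxS p (x + p^2)
  have h1 : (p:ℤ)^2 ∣ s' - (s - p) := by
    have := auxB p hp x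
    convert this using 1; ring
  have h2 : (p:ℤ)^2 ∣ auxF p s' - auxF p (s - p) := by
    refine Int.ModEq.dvd (Int.ModEq.symm ?_)
    refine auxProdModEq _ _ _ _ fun k hk => ?_
    refine Int.modEq_iff_dvd.mpr ?_
    have h9 : s - p - (k:ℤ) - (s' - k) = -(s' - (s - p)) := by ring
    rw [h9]
    exact dvd_neg.mpr h1
  have h3 : (p:ℤ)^2 ∣ auxF p (s - p) - auxF p s - p := by
    have h := auxG p hp (-(p:ℤ)) s ⟨-1, by ring⟩
    have h9 : auxF p (s + -(p:ℤ)) - auxF p s + -(p:ℤ) = auxF p (s - p) - auxF p s - p := by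
      ring_nf
    rw [h9] at h
    have : (p:ℤ) * -(p:ℤ) = -((p:ℤ)^2) := by ring
    rw [this, neg_dvd] at h
    exact h
  have h4 : (p:ℤ)^2 ∣ auxF p s' - auxF p s - p := by
    have := dvd_add h2 h3
    convert (show (p:ℤ)^2 ∣ _ from this) using 1; ring
  rw [auxFS p hp s', auxFS p hp s] at h4
  have h5 : (p:ℤ) * (p:ℤ) ∣ (p:ℤ) * (auxS p s' - auxS p s - 1) := by
    convert h4 using 1 <;> ring
  exact (mul_dvd_mul_iff_left hp0).mp h5

private lemma auxI (p : ℕ) (hp : p.Prime) (x : ℤ) (i : ℤ) :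
    (p : ℤ) ∣ auxS p (auxS p (x + i * p^2)) - auxS p (auxS p x) - i := by
  induction i using Int.induction_on with
  | zero => simp
  | succ i ih =>
    have e : x + ((i:ℤ)+1) * p^2 = (x + i * p^2) + p^2 := by ring
    rw [e]
    have h := auxC p hp (x + i * p^2)
    have hd := dvd_add ih h
    convert (show (p:ℤ) ∣ _ from hd) using 1; push_cast; ring
  | pred i ih =>
    have e : x + (-(i:ℤ)) * p^2 = (x + (-(i:ℤ) - 1) * p^2) + p^2 := by ring
    rw [e] at ih
    have h := auxC p hp (x + (-(i:ℤ) - 1) * p^2)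
    have h2 := dvd_sub ih h
    convert (show (p:ℤ) ∣ _ from h2) using 1; push_cast; ring

private lemma auxProdEq (p : ℕ) (hp : p.Prime) (x : ℤ) :
    (∏ k ∈ range p, (auxF p x - k * p)) = (p:ℤ)^(p+1) * auxS p (auxS p x) := by
  have h1 : ∀ k ∈ range p, auxF p x - k * p = p * (auxS p x - k) := fun k _ => by
    rw [auxFS p hp x]; ring
  rw [Finset.prod_congr rfl h1, Finset.prod_mul_distrib, Finset.prod_const, card_range]
  have h2 : (∏ k ∈ range p, (auxS p x - k)) = auxF p (auxS p x) := rfl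
  rw [h2, auxFS p hp (auxS p x)]; ring

theorem stmt_11 (p : ℕ) (hp : p.Prime) (j : ℤ) (hj0 : 0 ≤ j) (hjp : j < (p : ℤ) ^ 2) :
    ∀ i₁ i₂ : ℤ,
      ((p : ℤ) ∣ ((∏ k ∈ Finset.range p,
            ((∏ l ∈ Finset.range p, (i₁ * p ^ 2 + j - l)) - k * p)) / (p : ℤ) ^ (p + 1) -
          (∏ k ∈ Finset.range p,
            ((∏ l ∈ Finset.range p, (i₂ * p ^ 2 + j - l)) - k * p)) / (p : ℤ) ^ (p + 1))
        ↔ (p : ℤ) ∣ (i₁ - i₂)) := by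
  intro i₁ i₂
  have hp0 : ((p:ℤ)) ≠ 0 := by exact_mod_cast hp.pos.ne'
  have hpow : ((p:ℤ))^(p+1) ≠ 0 := pow_ne_zero _ hp0
  have e1 : (∏ k ∈ Finset.range p,
      ((∏ l ∈ Finset.range p, (i₁ * (p:ℤ) ^ 2 + j - l)) - k * p))
      = (p:ℤ)^(p+1) * auxS p (auxS p (i₁ * (p:ℤ)^2 + j)) := auxProdEq p hp _
  have e2 : (∏ k ∈ Finset.range p,
      ((∏ l ∈ Finset.range p, (i₂ * (p:ℤ) ^ 2 + j - l)) - k * p))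
      = (p:ℤ)^(p+1) * auxS p (auxS p (i₂ * (p:ℤ)^2 + j)) := auxProdEq p hp _
  rw [e1, e2, Int.mul_ediv_cancel_left _ hpow, Int.mul_ediv_cancel_left _ hpow]
  have hI1 := auxI p hp j i₁
  have hI2 := auxI p hp j i₂
  have ea : j + i₁ * (p:ℤ)^2 = i₁ * (p:ℤ)^2 + j := by ring
  have eb : j + i₂ * (p:ℤ)^2 = i₂ * (p:ℤ)^2 + j := by ring
  rw [ea] at hI1; rw [eb] at hI2
  have key : (p:ℤ) ∣ (auxS p (auxS p (i₁ * (p:ℤ)^2 + j)) - auxS p (auxS p (i₂ * (p:ℤ)^2 + j)))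
      - (i₁ - i₂) := by
    have := dvd_sub hI1 hI2
    convert (show (p:ℤ) ∣ _ from this) using 1; ring
  constructor
  · intro h
    have := dvd_sub h key
    convert (show (p:ℤ) ∣ _ from this) using 1; ring
  · intro h
    have := dvd_add h key
    convert (show (p:ℤ) ∣ _ from this) using 1; ring
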